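/- Let T be the operator defined by (Tf)(x) = x·f(α(x)), where α(x) = {1/x} is the Gauss map, and let g = (√5 − 1)/2. Then for every p > 1, every n ∈ ℕ, and every f ∈ L^p((0,1), m), we have ∫_0^1 |T^n f(x)|^p dm(x) ≤ g^{(n−1)p} ∫_0^1 |f(x)|^p dm(x), where m is the Gauss measure. -/

import Mathlib

open MeasureTheory ENNReal
open scoped ENNReal

/-- The Gauss map `α(x) = {1/x}`. -/
noncomputable def gaussMap (x : ℝ) : ℝ := Int.fract x⁻¹

/-- The operator `(Tf)(x) = x · f(α(x))`. -/
noncomputable def Tmap (f : ℝ → ℝ) : ℝ → ℝ := fun x => x * f (gaussMap x)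

/-- The Gauss measure on `(0,1)`, with density `1/((1+x) log 2)`. -/
noncomputable def gaussμ : Measure ℝ :=
  ((volume.restrict (Set.Ioo (0:ℝ) 1)).withDensity
    (fun x => ENNReal.ofReal ((Real.log 2)⁻¹ * (1 + x)⁻¹)))

namespace GaussAux

noncomputable def gr : ℝ := (Real.sqrt 5 - 1) / 2

lemma sqrt5_sq : Real.sqrt 5 ^ 2 = 5 := Real.sq_sqrt (by norm_num)

lemma gr_pos : 0 < gr := by
  have h5 : (2:ℝ) < Real.sqrt 5 := by
    nlinarith [sqrt5_sq, Real.sqrt_nonneg 5]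
  unfold gr; linarith

lemma gr_lt_one : gr < 1 := by
  have h5 : Real.sqrt 5 < 3 := by nlinarith [sqrt5_sq, Real.sqrt_nonneg 5]
  unfold gr; linarith

lemma gr_sq : gr ^ 2 = 1 - gr := by
  have := sqrt5_sq
  unfold gr; nlinarith

lemma gaussMap_mem (x : ℝ) : gaussMap x ∈ Set.Ico (0:ℝ) 1 :=
  ⟨Int.fract_nonneg _, Int.fract_lt_one _⟩

lemma iterate_mem (k : ℕ) (x : ℝ) (hx : x ∈ Set.Ico (0:ℝ) 1) :
    gaussMap^[k] x ∈ Set.Ico (0:ℝ) 1 := by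
  cases k with
  | zero => simpa using hx
  | succ n => rw [Function.iterate_succ_apply']; exact gaussMap_mem _

lemma gaussMap_measurable : Measurable gaussMap :=
  measurable_fract.comp measurable_inv

noncomputable def P (n : ℕ) (x : ℝ) : ℝ := ∏ k ∈ Finset.range n, gaussMap^[k] x

lemma P_succ (n : ℕ) (x : ℝ) : P (n+1) x = x * P n (gaussMap x) := by
  unfold P
  rw [Finset.prod_range_succ']
  simp only [Function.iterate_succ_apply, Function.iterate_zero_apply]
  ring

lemma P_nonneg (n : ℕ) (x : ℝ) (hx : x ∈ Set.Ico (0:ℝ) 1) : 0 ≤ P n x :=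
  Finset.prod_nonneg (fun k _ => (iterate_mem k x hx).1)

lemma step_key {y : ℝ} (hy : y ∈ Set.Ico (0:ℝ) 1) (hg : gr < y) :
    y * gaussMap y ≤ gr ^ 2 := by
  have hy0 : 0 < y := lt_trans gr_pos hg
  have hy1 : 1 < y⁻¹ := by
    rw [lt_inv_comm₀ one_pos hy0] <;> simpa using hy.2
  have hfl : (1 : ℤ) ≤ ⌊y⁻¹⌋ := Int.le_floor.mpr (by exact_mod_cast hy1.le)
  have hflR : (1:ℝ) ≤ (⌊y⁻¹⌋ : ℝ) := by exact_mod_cast hfl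
  have h1 : gaussMap y ≤ y⁻¹ - 1 := by
    have : gaussMap y = y⁻¹ - ⌊y⁻¹⌋ := rfl
    rw [this]; linarith
  have h2 : y * gaussMap y ≤ 1 - y := by
    have := mul_le_mul_of_nonneg_left h1 hy0.le
    rwa [mul_sub, mul_inv_cancel₀ hy0.ne', mul_one] at this
  rw [gr_sq]; linarith

lemma P_le (n : ℕ) : ∀ x ∈ Set.Ico (0:ℝ) 1, P (n+1) x ≤ gr ^ n := by
  induction n using Nat.strong_induction_on with
  | _ n ih =>
    intro x hx
    match n with
    | 0 => simpa [P] using hx.2.le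
    | (m+1) =>
      by_cases hxg : x ≤ gr
      · rw [P_succ]
        have h1 := ih m (by omega) (gaussMap x) (gaussMap_mem x)
        calc x * P (m+1) (gaussMap x) ≤ gr * gr ^ m :=
              mul_le_mul hxg h1 (P_nonneg _ _ (gaussMap_mem x)) gr_pos.le
          _ = gr ^ (m+1) := by ring
      · push_neg at hxg
        match m with
        | 0 =>
          rw [P_succ, P_succ]
          simp only [P, Finset.range_zero, Finset.prod_empty, mul_one]
          have := step_key ⟨hx.1, hx.2⟩ hxg
          calc x * gaussMap x ≤ gr ^ 2 := this
            _ ≤ gr ^ 1 := by nlinarith [gr_pos, gr_lt_one]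
        | (j+1) =>
          rw [P_succ, P_succ]
          have h2 := ih j (by omega) (gaussMap (gaussMap x)) (gaussMap_mem _)
          have hkey := step_key hx hxg
          have hnn := P_nonneg (j+1) _ (gaussMap_mem (gaussMap x))
          have hg0 : (0:ℝ) ≤ gaussMap x := (gaussMap_mem x).1
          have hx0 : (0:ℝ) ≤ x := hx.1
          calc x * (gaussMap x * P (j+1) (gaussMap (gaussMap x)))
              = (x * gaussMap x) * P (j+1) (gaussMap (gaussMap x)) := by ring
            _ ≤ gr ^ 2 * gr ^ j := mul_le_mul hkey h2 hnn (by positivity)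
            _ = gr ^ (j+2) := by ring

lemma Tmap_iterate (f : ℝ → ℝ) (n : ℕ) (x : ℝ) :
    Tmap^[n] f x = P n x * f (gaussMap^[n] x) := by
  induction n generalizing f with
  | zero => simp [P]
  | succ n ih =>
    rw [Function.iterate_succ_apply, ih (Tmap f)]
    show P n x * (gaussMap^[n] x * f (gaussMap (gaussMap^[n] x))) = _
    unfold P
    rw [Finset.prod_range_succ, Function.iterate_succ_apply']
    ring

noncomputable def dens : ℝ → ℝ≥0∞ := fun x => ENNReal.ofReal ((Real.log 2)⁻¹ * (1 + x)⁻¹)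

lemma dens_measurable : Measurable dens :=
  (((measurable_const.add measurable_id).inv).const_mul _).ennreal_ofReal

/-- one-dimensional change of variables for lintegrals -/
lemma lintegral_image_eq {s : Set ℝ} {f f' : ℝ → ℝ} (hs : MeasurableSet s)
    (hf' : ∀ x ∈ s, HasDerivWithinAt f (f' x) s x) (hf : Set.InjOn f s) (g : ℝ → ℝ≥0∞) :
    ∫⁻ x in f '' s, g x = ∫⁻ x in s, ENNReal.ofReal |f' x| * g (f x) := by
  simpa only [ContinuousLinearMap.det_toSpanSingleton] using
    lintegral_image_eq_lintegral_abs_det_fderiv_mul volume hs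
      (fun x hx => (hf' x hx).hasFDerivWithinAt) hf g

/-- the branches of the Gauss map -/
def S (k : ℕ) : Set ℝ := Set.Ioo ((k:ℝ)+2)⁻¹ ((k:ℝ)+1)⁻¹

lemma S_subset (k : ℕ) : S k ⊆ Set.Ioo (0:ℝ) 1 := by
  intro x hx
  have h1 : (0:ℝ) < ((k:ℝ)+2)⁻¹ := by positivity
  have h2 : ((k:ℝ)+1)⁻¹ ≤ 1 := by
    rw [inv_le_one_iff₀]; right; push_cast; linarith [Nat.cast_nonneg (α := ℝ) k]
  exact ⟨lt_of_le_of_lt h1.le hx.1, lt_of_lt_of_le hx.2 h2⟩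

lemma inv_lt_inv'' {a b : ℝ} (ha : 0 < a) (h : a < b) : b⁻¹ < a⁻¹ := by
  have := one_div_lt_one_div_of_lt ha h
  simpa [one_div] using this

lemma ae_eq_union : (Set.Ioo (0:ℝ) 1 : Set ℝ) =ᵐ[volume] ⋃ k, S k := by
  rw [MeasureTheory.ae_eq_set]
  constructor
  · refine measure_mono_null ?_ ((Set.countable_range (fun n : ℕ => (n:ℝ)⁻¹)).measure_zero _)
    intro x hx
    ·
      obtain ⟨⟨hx0, hx1⟩, hxU⟩ := hx
      have hx1' : 1 < x⁻¹ := by rw [lt_inv_comm₀ one_pos hx0]; simpa using hx1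
      set n := ⌊x⁻¹⌋₊ with hn
      have hn1 : 1 ≤ n := Nat.le_floor (by exact_mod_cast hx1'.le)
      have hle : (n:ℝ) ≤ x⁻¹ := Nat.floor_le (by positivity)
      have hlt : x⁻¹ < (n:ℝ) + 1 := Nat.lt_floor_add_one _
      rcases eq_or_lt_of_le hle with heq | hlt2
      · refine ⟨n, ?_⟩
        show ((n:ℕ):ℝ)⁻¹ = x
        rw [heq, inv_inv]
      · exfalso
        apply hxU
        refine Set.mem_iUnion.mpr ⟨n - 1, ?_⟩
        have hcast : ((n - 1 : ℕ) : ℝ) = (n:ℝ) - 1 := by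
          push_cast [Nat.cast_sub hn1]; ring
        constructor
        · rw [hcast]
          have : ((n:ℝ) - 1) + 2 = (n:ℝ) + 1 := by ring
          rw [this]
          have hpos : (0:ℝ) < (n:ℝ) + 1 := by positivity
          calc ((n:ℝ)+1)⁻¹ < (x⁻¹)⁻¹ := inv_lt_inv'' (by positivity) hlt
            _ = x := inv_inv x
        · rw [hcast]
          have : ((n:ℝ) - 1) + 1 = (n:ℝ) := by ring
          rw [this]
          calc x = (x⁻¹)⁻¹ := (inv_inv x).symm
            _ < ((n:ℝ))⁻¹ := inv_lt_inv'' (by exact_mod_cast Nat.cast_pos.mpr hn1) hlt2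
  · have : (⋃ k, S k) \ Set.Ioo (0:ℝ) 1 = ∅ := by
      rw [Set.diff_eq_empty]
      exact Set.iUnion_subset S_subset
    simp [this]

lemma S_disjoint : Pairwise (Function.onFun Disjoint S) := by
  have key : ∀ i j : ℕ, i < j → Disjoint (S i) (S j) := by
    intro i j hij
    rw [S, S, Set.Ioo_disjoint_Ioo]
    have h1 : ((j:ℝ)+1)⁻¹ ≤ ((i:ℝ)+2)⁻¹ := by
      rw [← one_div, ← one_div]
      apply one_div_le_one_div_of_le (by positivity)
      have : (i:ℝ) + 1 ≤ (j:ℝ) := by exact_mod_cast Nat.succ_le_of_lt hij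
      linarith
    exact le_trans (le_trans (min_le_right _ _) h1) (le_max_left _ _)
  intro i j hij
  rcases hij.lt_or_gt with h | h
  · exact key i j h
  · exact (key j i h).symm

lemma S_image (k : ℕ) :
    S k = (fun y : ℝ => (y + ((k:ℝ)+1))⁻¹) '' Set.Ioo (0:ℝ) 1 := by
  set c : ℝ := (k:ℝ) + 1 with hc
  have hc1 : (1:ℝ) ≤ c := by rw [hc]; linarith [Nat.cast_nonneg (α := ℝ) k]
  have hc0 : (0:ℝ) < c := lt_of_lt_of_le one_pos hc1
  ext x
  constructor
  · rintro ⟨h1, h2⟩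
    rw [show (k:ℝ) + 2 = c + 1 by rw [hc]; ring] at h1
    have hx0 : 0 < x := lt_trans (by positivity) h1
    refine ⟨x⁻¹ - c, ⟨?_, ?_⟩, ?_⟩
    · have : c < x⁻¹ := by
        have := inv_lt_inv'' hx0 h2
        rwa [inv_inv] at this
      linarith
    · have : x⁻¹ < c + 1 := by
        have := inv_lt_inv'' (by positivity) h1
        rwa [inv_inv] at this
      linarith
    · simp only [sub_add_cancel, inv_inv]
  · rintro ⟨y, ⟨hy0, hy1⟩, rfl⟩
    constructor
    · rw [show (k:ℝ) + 2 = c + 1 by rw [hc]; ring]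
      exact inv_lt_inv'' (by positivity) (by linarith)
    · exact inv_lt_inv'' (by positivity) (by linarith)

lemma branch_eq (k : ℕ) (H : ℝ → ℝ≥0∞) :
    ∫⁻ x in S k, dens x * H (gaussMap x) =
      ∫⁻ y in Set.Ioo (0:ℝ) 1,
        ENNReal.ofReal ((Real.log 2)⁻¹ * ((y + ((k:ℝ)+1))⁻¹ - (y + ((k:ℝ)+2))⁻¹)) * H y := by
  set c : ℝ := (k:ℝ) + 1 with hc
  have hc1 : (1:ℝ) ≤ c := by rw [hc]; linarith [Nat.cast_nonneg (α := ℝ) k]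
  have hderiv : ∀ y ∈ Set.Ioo (0:ℝ) 1,
      HasDerivWithinAt (fun y : ℝ => (y + c)⁻¹) (-1 / (y + c) ^ 2) (Set.Ioo (0:ℝ) 1) y := by
    intro y hy
    have hyc : 0 < y + c := by linarith [hy.1]
    exact (((hasDerivAt_id y).add_const c).inv hyc.ne').hasDerivWithinAt
  have hinj : Set.InjOn (fun y : ℝ => (y + c)⁻¹) (Set.Ioo (0:ℝ) 1) := by
    intro a ha b hb hab
    have ha0 : 0 < a + c := by linarith [ha.1]
    have hb0 : 0 < b + c := by linarith [hb.1]
    have := inv_injective hab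
    linarith [this]
  rw [S_image k, ← hc, lintegral_image_eq measurableSet_Ioo hderiv hinj]
  apply setLIntegral_congr_fun measurableSet_Ioo
  intro y hy
  beta_reduce
  have hyc : 0 < y + c := by linarith [hy.1]
  have habs : |(-1 : ℝ) / (y + c) ^ 2| = ((y + c) ^ 2)⁻¹ := by
    rw [abs_div, abs_neg, abs_one, abs_of_pos (by positivity), one_div]
  have hfr : gaussMap ((y + c)⁻¹) = y := by
    unfold gaussMap
    rw [inv_inv, hc]
    have : y + ((k:ℝ) + 1) = y + ((k+1 : ℕ) : ℤ) := by push_cast; ring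
    rw [this, Int.fract_add_intCast, Int.fract_eq_self.mpr ⟨hy.1.le, hy.2⟩]
  rw [hfr, habs]
  unfold dens
  rw [← mul_assoc, ← ENNReal.ofReal_mul (by positivity)]
  congr 1
  have h1 : (0:ℝ) < y + c + 1 := by linarith
  have harith : ((y + c) ^ 2)⁻¹ * ((Real.log 2)⁻¹ * (1 + (y + c)⁻¹)⁻¹) =
      (Real.log 2)⁻¹ * ((y + c)⁻¹ - (y + c + 1)⁻¹) := by
    rw [mul_comm (((y + c) ^ 2)⁻¹), mul_assoc]
    congr 1
    field_simp
    ring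
  rw [harith, hc]
  norm_num
  ring_nf

lemma telescope (y : ℝ) (hy : y ∈ Set.Ioo (0:ℝ) 1) :
    ∑' k : ℕ, ENNReal.ofReal
        ((Real.log 2)⁻¹ * ((y + ((k:ℝ)+1))⁻¹ - (y + ((k:ℝ)+2))⁻¹)) =
      ENNReal.ofReal ((Real.log 2)⁻¹ * (1 + y)⁻¹) := by
  set b : ℕ → ℝ := fun k => (y + ((k:ℝ)+1))⁻¹ with hb
  have hy0 : 0 < y := hy.1
  have hmono : ∀ k : ℕ, 0 ≤ (Real.log 2)⁻¹ * (b k - b (k+1)) := by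
    intro k
    have h1 : (0:ℝ) < y + ((k:ℝ)+1) := by positivity
    have h2 : b (k+1) ≤ b k := by
      apply le_of_lt
      apply inv_lt_inv'' h1
      push_cast; linarith
    have hl : (0:ℝ) ≤ (Real.log 2)⁻¹ := by
      have := Real.log_pos (by norm_num : (1:ℝ) < 2)
      positivity
    exact mul_nonneg hl (by linarith)
  have hsum : HasSum (fun k : ℕ => (Real.log 2)⁻¹ * (b k - b (k+1)))
      ((Real.log 2)⁻¹ * (1 + y)⁻¹) := by
    have hb0 : b 0 = (1 + y)⁻¹ := by simp [hb]; ring_nf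
    have htend : Filter.Tendsto b Filter.atTop (nhds 0) := by
      apply Filter.Tendsto.comp tendsto_inv_atTop_zero
      apply Filter.tendsto_atTop_mono (fun k : ℕ => by push_cast; linarith [hy0] : ∀ k : ℕ, (k:ℝ) ≤ y + ((k:ℝ)+1))
      exact tendsto_natCast_atTop_atTop
    have hs : HasSum (fun k : ℕ => b k - b (k+1)) (b 0) := by
      rw [hasSum_iff_tendsto_nat_of_nonneg (fun k => by
        have := hmono k
        have hl : (0:ℝ) < (Real.log 2)⁻¹ := by
          have := Real.log_pos (by norm_num : (1:ℝ) < 2); positivity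
        nlinarith)]
      simp only [Finset.sum_range_sub']
      have : Filter.Tendsto (fun n => b 0 - b n) Filter.atTop (nhds (b 0 - 0)) :=
        Filter.Tendsto.sub tendsto_const_nhds htend
      simpa using this
    rw [hb0] at hs
    exact hs.mul_left _
  have heq : ∀ k : ℕ, (y + ((k:ℝ)+1))⁻¹ - (y + ((k:ℝ)+2))⁻¹ = b k - b (k+1) := by
    intro k; simp only [hb]; push_cast; ring_nf
  calc ∑' k : ℕ, ENNReal.ofReal ((Real.log 2)⁻¹ * ((y + ((k:ℝ)+1))⁻¹ - (y + ((k:ℝ)+2))⁻¹))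
      = ∑' k : ℕ, ENNReal.ofReal ((Real.log 2)⁻¹ * (b k - b (k+1))) := by
        congr 1; ext k; rw [heq k]
    _ = ENNReal.ofReal (∑' k : ℕ, (Real.log 2)⁻¹ * (b k - b (k+1))) :=
        (ENNReal.ofReal_tsum_of_nonneg hmono hsum.summable).symm
    _ = ENNReal.ofReal ((Real.log 2)⁻¹ * (1 + y)⁻¹) := by rw [hsum.tsum_eq]

lemma gaussμ_eq : gaussμ = (volume.restrict (Set.Ioo (0:ℝ) 1)).withDensity dens := rfl

lemma lintegral_comp_gaussMap (H : ℝ → ℝ≥0∞) (hH : Measurable H) :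
    ∫⁻ x, H (gaussMap x) ∂gaussμ = ∫⁻ x, H x ∂gaussμ := by
  rw [gaussμ_eq, lintegral_withDensity_eq_lintegral_mul _ dens_measurable
        (g := fun x => H (gaussMap x)) (hH.comp gaussMap_measurable),
      lintegral_withDensity_eq_lintegral_mul _ dens_measurable hH]
  simp only [Pi.mul_apply]
  show ∫⁻ x in Set.Ioo (0:ℝ) 1, dens x * H (gaussMap x) = ∫⁻ x in Set.Ioo (0:ℝ) 1, dens x * H x
  rw [setLIntegral_congr ae_eq_union]
  simp only [S]
  rw [lintegral_iUnion (fun k => measurableSet_Ioo)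
      (by exact S_disjoint)]
  rw [show (fun k : ℕ => ∫⁻ x in Set.Ioo ((k:ℝ)+2)⁻¹ ((k:ℝ)+1)⁻¹, dens x * H (gaussMap x)) =
      (fun k : ℕ => ∫⁻ x in S k, dens x * H (gaussMap x)) from rfl]
  have hterm : ∀ k : ℕ, ∫⁻ x in S k, dens x * H (gaussMap x) =
      ∫⁻ y in Set.Ioo (0:ℝ) 1,
        ENNReal.ofReal ((Real.log 2)⁻¹ * ((y + ((k:ℝ)+1))⁻¹ - (y + ((k:ℝ)+2))⁻¹)) * H y :=
    fun k => branch_eq k H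
  rw [tsum_congr hterm]
  rw [← lintegral_tsum (f := fun (k : ℕ) (y : ℝ) =>
        ENNReal.ofReal ((Real.log 2)⁻¹ * ((y + ((k:ℝ)+1))⁻¹ - (y + ((k:ℝ)+2))⁻¹)) * H y)
      (fun k => ((((((measurable_id.add_const _).inv).sub
        ((measurable_id.add_const _).inv)).const_mul _).ennreal_ofReal).mul hH).aemeasurable)]
  apply setLIntegral_congr_fun measurableSet_Ioo
  intro y hy
  beta_reduce
  rw [ENNReal.tsum_mul_right, telescope y hy]
  rfl

lemma lintegral_comp_gaussMap_iter (n : ℕ) (H : ℝ → ℝ≥0∞) (hH : Measurable H) :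
    ∫⁻ x, H (gaussMap^[n] x) ∂gaussμ = ∫⁻ x, H x ∂gaussμ := by
  induction n with
  | zero => simp
  | succ n ih =>
    simp only [Function.iterate_succ_apply]
    exact (lintegral_comp_gaussMap (fun z => H (gaussMap^[n] z))
      (hH.comp (gaussMap_measurable.iterate n))).trans ih

lemma ae_mem_Ioo : ∀ᵐ x ∂gaussμ, x ∈ Set.Ioo (0:ℝ) 1 := by
  have h0 : gaussμ (Set.Ioo (0:ℝ) 1)ᶜ = 0 := by
    rw [gaussμ_eq, withDensity_apply _ measurableSet_Ioo.compl,
        Measure.restrict_restrict measurableSet_Ioo.compl]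
    simp
  apply ae_iff.mpr
  have hset : {a : ℝ | ¬ a ∈ Set.Ioo (0:ℝ) 1} = (Set.Ioo (0:ℝ) 1)ᶜ := rfl
  rw [hset]
  exact h0

lemma comp_ae_eq (n : ℕ) {f g : ℝ → ℝ} (hfg : f =ᵐ[gaussμ] g) :
    (fun x => f (gaussMap^[n] x)) =ᵐ[gaussμ] (fun x => g (gaussMap^[n] x)) := by
  obtain ⟨N, hNsub, hNmeas, hN0⟩ :=
    exists_measurable_superset_of_null (ae_iff.mp hfg)
  have hpre : gaussμ ((gaussMap^[n]) ⁻¹' N) = 0 := by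
    have hind : ∀ x : ℝ, ((gaussMap^[n]) ⁻¹' N).indicator (fun _ => (1:ℝ≥0∞)) x =
        N.indicator (fun _ => (1:ℝ≥0∞)) (gaussMap^[n] x) := by
      intro x
      by_cases h : gaussMap^[n] x ∈ N <;> simp [Set.indicator_apply, h]
    have := lintegral_comp_gaussMap_iter n (N.indicator (fun _ => (1:ℝ≥0∞)))
      (measurable_one.indicator hNmeas)
    calc gaussμ ((gaussMap^[n]) ⁻¹' N)
        = ∫⁻ x, ((gaussMap^[n]) ⁻¹' N).indicator (fun _ => (1:ℝ≥0∞)) x ∂gaussμ := by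
          rw [lintegral_indicator (gaussMap_measurable.iterate n hNmeas)]
          simp
      _ = ∫⁻ x, N.indicator (fun _ => (1:ℝ≥0∞)) (gaussMap^[n] x) ∂gaussμ := by
          simp_rw [hind]
      _ = ∫⁻ x, N.indicator (fun _ => (1:ℝ≥0∞)) x ∂gaussμ := this
      _ = gaussμ N := by rw [lintegral_indicator hNmeas]; simp
      _ = 0 := hN0
  apply ae_iff.mpr
  apply measure_mono_null _ hpre
  intro x hx
  exact Set.mem_preimage.mpr (hNsub (by simpa using hx))

end GaussAux

open GaussAux

/-- Contraction property of `T` on `L^p` of the Gauss measure: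
`∫ |Tⁿf|^p dm ≤ g^{(n-1)p} ∫ |f|^p dm` with `g = (√5 - 1)/2`. -/
theorem Tmap_iterate_Lp_contraction (p : ℝ) (hp : 1 < p) (n : ℕ) (f : ℝ → ℝ)
    (hf : MemLp f (ENNReal.ofReal p) gaussμ) :
    ∫ x, |Tmap^[n] f x| ^ p ∂gaussμ ≤
      (((Real.sqrt 5 - 1) / 2) ^ (((n : ℝ) - 1) * p)) * ∫ x, |f x| ^ p ∂gaussμ := by
  have hp0 : 0 < p := lt_trans one_pos hp
  obtain ⟨f₀, hf₀m, hff₀⟩ : ∃ f₀ : ℝ → ℝ, Measurable f₀ ∧ f =ᵐ[gaussμ] f₀ :=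
    ⟨hf.1.mk f, hf.1.stronglyMeasurable_mk.measurable, hf.1.ae_eq_mk⟩
  -- replace f by f₀ in both integrals
  have hTfeq : (fun x => |Tmap^[n] f x| ^ p) =ᵐ[gaussμ] (fun x => |Tmap^[n] f₀ x| ^ p) := by
    filter_upwards [comp_ae_eq n hff₀] with x hx
    simp only [Tmap_iterate, hx]
  have hfeq : (fun x => |f x| ^ p) =ᵐ[gaussμ] (fun x => |f₀ x| ^ p) := by
    filter_upwards [hff₀] with x hx
    rw [hx]
  rw [integral_congr_ae hTfeq, integral_congr_ae hfeq]
  have hI0 : 0 ≤ ∫ x, |f₀ x| ^ p ∂gaussμ :=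
    integral_nonneg fun x => Real.rpow_nonneg (abs_nonneg _) p
  -- the case n = 0
  cases n with
  | zero =>
    simp only [Function.iterate_zero, id_eq, Nat.cast_zero]
    have h1 : 1 ≤ ((Real.sqrt 5 - 1) / 2) ^ ((0 - 1 : ℝ) * p) := by
      apply Real.one_le_rpow_of_pos_of_le_one_of_nonpos gr_pos gr_lt_one.le
      nlinarith
    nlinarith
  | succ m =>
    -- measurability and integrability facts
    have hmeas₀ : Measurable (fun y => |f₀ y| ^ p) :=
      (Real.continuous_rpow_const hp0.le).measurable.comp hf₀m.abs
    have hint : Integrable (fun x => |f₀ x| ^ p) gaussμ := by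
      have h1 := hf.integrable_norm_rpow
        (by simp [ENNReal.ofReal_eq_zero]; linarith) ENNReal.ofReal_ne_top
      rw [ENNReal.toReal_ofReal hp0.le] at h1
      apply h1.congr
      filter_upwards [hff₀] with x hx
      rw [Real.norm_eq_abs, hx]
    set H : ℝ → ℝ≥0∞ := fun y => ENNReal.ofReal (|f₀ y| ^ p) with hH
    have hHm : Measurable H := hmeas₀.ennreal_ofReal
    have hJtop : ∫⁻ y, H y ∂gaussμ < ⊤ := by
      have h2 := hint.hasFiniteIntegral
      rwa [hasFiniteIntegral_iff_ofReal
        (Filter.Eventually.of_forall fun x => Real.rpow_nonneg (abs_nonneg _) p)] at h2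
    have hinvar : ∫⁻ x, H (gaussMap^[m+1] x) ∂gaussμ = ∫⁻ y, H y ∂gaussμ :=
      lintegral_comp_gaussMap_iter (m+1) H hHm
    have hint2 : Integrable (fun x => |f₀ (gaussMap^[m+1] x)| ^ p) gaussμ := by
      constructor
      · exact (hmeas₀.comp (gaussMap_measurable.iterate (m+1))).aestronglyMeasurable
      · rw [hasFiniteIntegral_iff_ofReal
          (Filter.Eventually.of_forall fun x => Real.rpow_nonneg (abs_nonneg _) p)]
        rw [show (fun x => ENNReal.ofReal (|f₀ (gaussMap^[m+1] x)| ^ p)) =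
            (fun x => H (gaussMap^[m+1] x)) from rfl] at *
        rw [hinvar]
        exact hJtop
    have hinteq : ∫ x, |f₀ (gaussMap^[m+1] x)| ^ p ∂gaussμ = ∫ x, |f₀ x| ^ p ∂gaussμ := by
      rw [integral_eq_lintegral_of_nonneg_ae
            (Filter.Eventually.of_forall fun x => Real.rpow_nonneg (abs_nonneg _) p)
            (hmeas₀.comp (gaussMap_measurable.iterate (m+1))).aestronglyMeasurable,
          integral_eq_lintegral_of_nonneg_ae
            (Filter.Eventually.of_forall fun x => Real.rpow_nonneg (abs_nonneg _) p)
            hmeas₀.aestronglyMeasurable]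
      exact congrArg ENNReal.toReal hinvar
    -- the constant
    have hC : ((Real.sqrt 5 - 1) / 2) ^ (((((m+1 : ℕ)) : ℝ) - 1) * p) = (gr ^ m) ^ p := by
      have h1 : ((((m+1 : ℕ)) : ℝ) - 1) = ((m : ℕ) : ℝ) := by push_cast; ring
      rw [h1, ← Real.rpow_natCast gr m, ← Real.rpow_mul gr_pos.le]
      rfl
    -- pointwise bound
    have hmono : ∀ᵐ x ∂gaussμ,
        |Tmap^[m+1] f₀ x| ^ p ≤ (gr ^ m) ^ p * |f₀ (gaussMap^[m+1] x)| ^ p := by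
      filter_upwards [ae_mem_Ioo] with x hx
      have hx' : x ∈ Set.Ico (0:ℝ) 1 := ⟨hx.1.le, hx.2⟩
      rw [Tmap_iterate]
      have hPnn : 0 ≤ P (m+1) x := P_nonneg _ _ hx'
      rw [abs_mul, abs_of_nonneg hPnn,
          Real.mul_rpow hPnn (abs_nonneg _)]
      exact mul_le_mul_of_nonneg_right
        (Real.rpow_le_rpow hPnn (P_le m x hx') hp0.le)
        (Real.rpow_nonneg (abs_nonneg _) p)
    calc ∫ x, |Tmap^[m+1] f₀ x| ^ p ∂gaussμ
        ≤ ∫ x, (gr ^ m) ^ p * |f₀ (gaussMap^[m+1] x)| ^ p ∂gaussμ :=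
          integral_mono_of_nonneg
            (Filter.Eventually.of_forall fun x => Real.rpow_nonneg (abs_nonneg _) p)
            (hint2.const_mul _) hmono
      _ = (gr ^ m) ^ p * ∫ x, |f₀ (gaussMap^[m+1] x)| ^ p ∂gaussμ := integral_const_mul _ _
      _ = ((Real.sqrt 5 - 1) / 2) ^ (((((m+1 : ℕ)) : ℝ) - 1) * p) * ∫ x, |f₀ x| ^ p ∂gaussμ := by
          rw [hinteq, hC]
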